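/- For every m ∈ ℕ there exists n₀ such that for all n ≥ n₀ there is no averaging set of order 1 and size n' ≤ m of the set B_{n,1} = [0, 1 - 1/n] ∪ [n, n + 1/n] ⊂ ℝ with points required to lie in B_{n,1}. Quantitatively: if x₁,...,x_k ∈ B_{n,1} satisfy (1/k)Σ x_j = (1/λ(B_{n,1}))∫_{B_{n,1}} x dx, then k ≥ (2/3)·n. -/
import Mathlib


open MeasureTheory Set

/-- The set `B_{n,1} = [0, 1 - 1/n] ∪ [n, n + 1/n] ⊂ ℝ`. -/
noncomputable def Bset1 (n : ℕ) : Set ℝ :=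
  Set.Icc 0 (1 - 1 / (n : ℝ)) ∪ Set.Icc (n : ℝ) ((n : ℝ) + 1 / (n : ℝ))

lemma Bset1_disjoint {n : ℕ} (hn : 1 ≤ n) :
    Disjoint (Set.Icc (0:ℝ) (1 - 1 / (n : ℝ))) (Set.Icc (n : ℝ) ((n : ℝ) + 1 / (n : ℝ))) := by
  have hn1 : (1:ℝ) ≤ n := by exact_mod_cast hn
  have hpos : (0:ℝ) < 1 / n := by positivity
  rw [Set.disjoint_left]
  rintro a ⟨_, ha2⟩ ⟨hb1, _⟩
  linarith

lemma Bset1_volume {n : ℕ} (hn : 1 ≤ n) : (volume (Bset1 n)).toReal = 1 := by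
  have hn1 : (1:ℝ) ≤ n := by exact_mod_cast hn
  have hpos : (0:ℝ) < 1 / n := by positivity
  have h1 : (0:ℝ) ≤ 1 - 1 / n := by
    have : (1:ℝ)/n ≤ 1 := by
      rw [div_le_one (by linarith)]; exact hn1
    linarith
  rw [Bset1, measure_union (Bset1_disjoint hn) measurableSet_Icc,
    Real.volume_Icc, Real.volume_Icc,
    ENNReal.toReal_add ENNReal.ofReal_ne_top ENNReal.ofReal_ne_top,
    ENNReal.toReal_ofReal (by linarith), ENNReal.toReal_ofReal (by linarith)]
  ring

lemma Icc_integral_id (a b : ℝ) (h : a ≤ b) :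
    ∫ t in Set.Icc a b, t = (b ^ 2 - a ^ 2) / 2 := by
  rw [MeasureTheory.integral_Icc_eq_integral_Ioc, ← intervalIntegral.integral_of_le h,
    integral_id]

lemma Bset1_integral {n : ℕ} (hn : 1 ≤ n) :
    (∫ t in Bset1 n, t) = 3 / 2 - 1 / (n : ℝ) + 1 / (n : ℝ) ^ 2 := by
  have hn1 : (1:ℝ) ≤ n := by exact_mod_cast hn
  have hnpos : (0:ℝ) < n := by linarith
  have hpos : (0:ℝ) < 1 / n := by positivity
  have h1 : (0:ℝ) ≤ 1 - 1 / n := by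
    have : (1:ℝ)/n ≤ 1 := by rw [div_le_one hnpos]; exact hn1
    linarith
  rw [Bset1, setIntegral_union (Bset1_disjoint hn) measurableSet_Icc
    (continuous_id'.integrableOn_Icc) (continuous_id'.integrableOn_Icc),
    Icc_integral_id _ _ h1, Icc_integral_id _ _ (by linarith)]
  field_simp
  ring

theorem stmt14 :
    (∀ m : ℕ, ∃ n₀ : ℕ, ∀ n : ℕ, n₀ ≤ n →
      ¬ ∃ (k : ℕ) (x : Fin k → ℝ), 0 < k ∧ k ≤ m ∧ (∀ j, x j ∈ Bset1 n) ∧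
        (k : ℝ)⁻¹ * ∑ j, x j =
          (volume (Bset1 n)).toReal⁻¹ * ∫ t in Bset1 n, t) ∧
    (∀ n : ℕ, 1 ≤ n → ∀ (k : ℕ) (x : Fin k → ℝ), 0 < k →
      (∀ j, x j ∈ Bset1 n) →
      (k : ℝ)⁻¹ * ∑ j, x j = (volume (Bset1 n)).toReal⁻¹ * ∫ t in Bset1 n, t →
      (2 / 3 : ℝ) * n ≤ k) := by
  have key : ∀ n : ℕ, 1 ≤ n → ∀ (k : ℕ) (x : Fin k → ℝ), 0 < k →
      (∀ j, x j ∈ Bset1 n) →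
      (k : ℝ)⁻¹ * ∑ j, x j = (volume (Bset1 n)).toReal⁻¹ * ∫ t in Bset1 n, t →
      (2 / 3 : ℝ) * n ≤ k := by
    intro n hn k x hk hx hmean
    have hn1 : (1:ℝ) ≤ n := by exact_mod_cast hn
    have hnpos : (0:ℝ) < n := by linarith
    have hpos : (0:ℝ) < 1 / n := by positivity
    have hkpos : (0:ℝ) < k := by exact_mod_cast hk
    rw [Bset1_volume hn, Bset1_integral hn] at hmean
    set I : ℝ := 3 / 2 - 1 / (n : ℝ) + 1 / (n : ℝ) ^ 2 with hI
    clear_value I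
    have hS : ∑ j, x j = k * I := by
      field_simp at hmean
      linarith [hmean]
    -- nonnegativity of each point
    have hnonneg : ∀ j, 0 ≤ x j := by
      intro j
      rcases hx j with h | h
      · exact h.1
      · exact le_trans (by linarith) h.1
    -- some point is ≥ n
    have hIgt : 1 - 1 / (n : ℝ) < I := by
      have : (0:ℝ) < 1 / (n:ℝ)^2 := by positivity
      rw [hI]; linarith
    have hex : ∃ j, (n : ℝ) ≤ x j := by
      by_contra hcon
      push_neg at hcon
      have hall : ∀ j, x j ≤ 1 - 1 / (n : ℝ) := by
        intro j
        rcases hx j with h | h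
        · exact h.2
        · exact absurd h.1 (not_le.2 (hcon j))
      have hsum : ∑ j, x j ≤ ∑ _j : Fin k, (1 - 1 / (n : ℝ)) :=
        Finset.sum_le_sum fun j _ => hall j
      rw [Finset.sum_const, Finset.card_univ, Fintype.card_fin, nsmul_eq_mul] at hsum
      rw [hS] at hsum
      nlinarith
    obtain ⟨j, hj⟩ := hex
    have hge : (n : ℝ) ≤ ∑ i, x i :=
      le_trans hj (Finset.single_le_sum (fun i _ => hnonneg i) (Finset.mem_univ j))
    have hIle : I ≤ 3 / 2 := by
      have h2 : 1 / (n:ℝ)^2 ≤ 1 / n := by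
        apply div_le_div_of_nonneg_left (by norm_num) hnpos
        nlinarith
      rw [hI]; linarith
    rw [hS] at hge
    have hh : (k:ℝ) * I ≤ (k:ℝ) * (3/2) := mul_le_mul_of_nonneg_left hIle (le_of_lt hkpos)
    linarith
  refine ⟨fun m => ⟨2 * m + 1, fun n hn => ?_⟩, key⟩
  rintro ⟨k, x, hk, hkm, hx, hmean⟩
  have h1 : 1 ≤ n := le_trans (by omega) hn
  have := key n h1 k x hk hx hmean
  have hnn : (2 * m + 1 : ℝ) ≤ n := by exact_mod_cast hn
  have hkm' : (k : ℝ) ≤ m := by exact_mod_cast hkm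
  nlinarith
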